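/- arXiv:1504.00950 — 2 statements merged into one kernel-verified Lean document; each statement's English description precedes it below -/
import Mathlib

section
/- (van der Corput inequality) Let u₀, u₁, …, u_{N−1} be complex numbers and let H be an integer with 0 ≤ H ≤ N−1. Then |(1/N) ∑_{n=0}^{N−1} u_n|² ≤ ((N+H)/(N²(H+1))) ∑_{n=0}^{N−1} |u_n|² + 2((N+H)/(N²(H+1)²)) ∑_{h=1}^{H} (H+1−h) · Re(∑_{n=0}^{N−h−1} u_{n+h} · conj(u_n)). -/
open Finset

/-- extended-by-zero shifted summand used in the van der Corput proof -/
def vdcA (N : ℕ) (u : ℕ → ℂ) (h m : ℕ) : ℂ :=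
  if h ≤ m ∧ m - h < N then u (m - h) else 0

lemma vdc_step1 (N H : ℕ) (u : ℕ → ℂ) :
    ∑ m ∈ range (N + H), ∑ h ∈ range (H + 1), vdcA N u h m
      = ((H : ℂ) + 1) * ∑ n ∈ range N, u n := by
  rw [Finset.sum_comm]
  have key : ∀ h ∈ range (H + 1),
      ∑ m ∈ range (N + H), vdcA N u h m = ∑ n ∈ range N, u n := by
    intro h hh
    rw [mem_range] at hh
    unfold vdcA
    rw [← Finset.sum_filter]
    have hset : (range (N + H)).filter (fun m => h ≤ m ∧ m - h < N) = Ico h (h + N) := by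
      ext m
      simp only [mem_filter, mem_range, mem_Ico]
      omega
    rw [hset, Finset.sum_Ico_eq_sum_range]
    refine Finset.sum_congr (by congr 1; omega) fun i _ => by congr 1; omega
  rw [Finset.sum_congr rfl key, Finset.sum_const, card_range, nsmul_eq_mul]
  push_cast
  ring

/-- value of the correlation sums, `h' ≤ h` case -/
lemma vdcT (N H : ℕ) (u : ℕ → ℂ) {h h' : ℕ} (hh : h ≤ H) (h'h : h' ≤ h) :
    ∑ m ∈ range (N + H), vdcA N u h m * (starRingEnd ℂ) (vdcA N u h' m)
      = ∑ k ∈ range (N - (h - h')), u k * (starRingEnd ℂ) (u (k + (h - h'))) := by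
  have e1 : ∀ m, vdcA N u h m * (starRingEnd ℂ) (vdcA N u h' m)
      = if (h ≤ m ∧ m - h < N) ∧ (h' ≤ m ∧ m - h' < N)
          then u (m - h) * (starRingEnd ℂ) (u (m - h')) else 0 := by
    intro m
    unfold vdcA
    split_ifs with p1 p2 p3 p3 <;> simp_all
  simp only [e1]
  rw [← Finset.sum_filter]
  have hset : (range (N + H)).filter
        (fun m => (h ≤ m ∧ m - h < N) ∧ (h' ≤ m ∧ m - h' < N))
      = Ico h (h + (N - (h - h'))) := by
    ext m
    simp only [mem_filter, mem_range, mem_Ico]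
    omega
  rw [hset, Finset.sum_Ico_eq_sum_range]
  refine Finset.sum_congr (by congr 1; omega) fun i _ => ?_
  have e2 : h + i - h = i := by omega
  have e3 : h + i - h' = i + (h - h') := by omega
  rw [e2, e3]

/-- counting lemma, lower triangle (including diagonal) -/
lemma vdcCount_le (H : ℕ) (g : ℕ → ℂ) :
    ∑ p ∈ (range (H + 1) ×ˢ range (H + 1)).filter (fun p => p.2 ≤ p.1), g (p.1 - p.2)
      = ∑ d ∈ range (H + 1), (H + 1 - d) • g d := by
  have h0 : ∑ d ∈ range (H + 1), (H + 1 - d) • g d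
      = ∑ q ∈ (range (H + 1)).sigma (fun d => range (H + 1 - d)), g q.1 := by
    rw [Finset.sum_sigma]
    refine Finset.sum_congr rfl fun d _ => ?_
    simp
  rw [h0]
  refine Finset.sum_nbij' (fun p => ⟨p.1 - p.2, p.2⟩) (fun q => (q.2 + q.1, q.2))
    ?_ ?_ ?_ ?_ ?_
  · intro p hp
    simp only [mem_filter, mem_product, mem_range] at hp
    simp only [mem_sigma, mem_range]
    omega
  · intro q hq
    simp only [mem_sigma, mem_range] at hq
    simp only [mem_filter, mem_product, mem_range]
    omega
  · rintro ⟨a, b⟩ hp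
    simp only [mem_filter, mem_product, mem_range] at hp
    have : b + (a - b) = a := by omega
    simp [this]
  · rintro ⟨d, s⟩ _
    simp
  · intro p _
    rfl

/-- counting lemma, strict upper triangle -/
lemma vdcCount_gt (H : ℕ) (g : ℕ → ℂ) :
    ∑ p ∈ (range (H + 1) ×ˢ range (H + 1)).filter (fun p => ¬ p.2 ≤ p.1), g (p.2 - p.1)
      = ∑ d ∈ range (H + 1), (H + 1 - d) • g d - (H + 1) • g 0 := by
  have key : ∑ p ∈ (range (H + 1) ×ˢ range (H + 1)).filter (fun p => ¬ p.2 ≤ p.1), g (p.2 - p.1)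
      = ∑ q ∈ ((range (H + 1)).sigma (fun d => range (H + 1 - d))).filter (fun q => 1 ≤ q.1),
          g q.1 := by
    refine Finset.sum_nbij' (fun p => ⟨p.2 - p.1, p.1⟩) (fun q => (q.2, q.2 + q.1)) ?_ ?_ ?_ ?_ ?_
    · intro p hp
      simp only [mem_filter, mem_product, mem_range] at hp
      simp only [mem_filter, mem_sigma, mem_range]
      omega
    · intro q hq
      simp only [mem_filter, mem_sigma, mem_range] at hq
      simp only [mem_filter, mem_product, mem_range]
      omega
    · rintro ⟨a, b⟩ hp
      simp only [mem_filter, mem_product, mem_range] at hp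
      have : a + (b - a) = b := by omega
      simp [this]
    · rintro ⟨d, s⟩ _
      simp
    · intro p _
      rfl
  rw [key, Finset.sum_filter, Finset.sum_sigma]
  have inner : ∀ d ∈ range (H + 1),
      (∑ s ∈ range (H + 1 - d), if 1 ≤ (⟨d, s⟩ : Σ _ : ℕ, ℕ).1 then g (⟨d, s⟩ : Σ _ : ℕ, ℕ).1
        else 0) = if 1 ≤ d then (H + 1 - d) • g d else 0 := by
    intro d _
    split_ifs with hd <;> simp [hd]
  rw [Finset.sum_congr rfl inner]
  rw [Finset.sum_range_succ' (fun a => if 1 ≤ a then (H + 1 - a) • g a else 0) H,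
    Finset.sum_range_succ' (fun d => (H + 1 - d) • g d) H]
  simp

/-- splitting off the `d = 0` term -/
lemma vdc_peel (n : ℕ) (F : ℕ → ℂ) :
    ∑ d ∈ range (n + 1), F d = F 0 + ∑ d ∈ Icc 1 n, F d := by
  have h : Icc 1 n = Ico 1 (n + 1) := by rw [Finset.Ico_add_one_right_eq_Icc]
  rw [h, range_eq_Ico, ← Finset.sum_Ico_consecutive _ (by omega : 0 ≤ 1) (by omega : 1 ≤ n + 1)]
  simp

/-- van der Corput's inequality: for complex numbers `u₀, …, u_{N−1}` and an integer
`0 ≤ H ≤ N−1`,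
`|(1/N) ∑_{n=0}^{N−1} u_n|² ≤ ((N+H)/(N²(H+1))) ∑_{n=0}^{N−1} |u_n|²
  + 2((N+H)/(N²(H+1)²)) ∑_{h=1}^{H} (H+1−h) Re(∑_{n=0}^{N−h−1} u_{n+h} conj(u_n))`. -/
theorem van_der_corput_inequality (N : ℕ) (hN : 0 < N) (u : ℕ → ℂ)
    (H : ℕ) (hH : H ≤ N - 1) :
    ‖(1 / (N : ℂ)) * ∑ n ∈ Finset.range N, u n‖ ^ 2 ≤
      (((N : ℝ) + H) / ((N : ℝ) ^ 2 * ((H : ℝ) + 1))) *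
          ∑ n ∈ Finset.range N, ‖u n‖ ^ 2
        + 2 * (((N : ℝ) + H) / ((N : ℝ) ^ 2 * ((H : ℝ) + 1) ^ 2)) *
          ∑ h ∈ Finset.Icc 1 H, ((H : ℝ) + 1 - h) *
            (∑ n ∈ Finset.range (N - h), u (n + h) * (starRingEnd ℂ) (u n)).re := by
  set S : ℂ := ∑ n ∈ Finset.range N, u n with hS
  set W : ℕ → ℂ := fun m => ∑ h ∈ range (H + 1), vdcA N u h m with hW
  set D : ℕ → ℂ := fun d => ∑ k ∈ range (N - d), u k * (starRingEnd ℂ) (u (k + d)) with hD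
  set A : ℝ := ∑ n ∈ Finset.range N, ‖u n‖ ^ 2 with hA
  set B : ℝ := ∑ h ∈ Finset.Icc 1 H, ((H : ℝ) + 1 - h) *
      (∑ n ∈ Finset.range (N - h), u (n + h) * (starRingEnd ℂ) (u n)).re with hB
  -- conjugates
  have hconjD : ∀ d, (starRingEnd ℂ) (D d) = ∑ n ∈ range (N - d), u (n + d) * (starRingEnd ℂ) (u n) := by
    intro d
    simp only [hD, map_sum, map_mul, Complex.conj_conj]
    exact Finset.sum_congr rfl fun k _ => mul_comm _ _
  have hD0 : (starRingEnd ℂ) (D 0) = D 0 := by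
    rw [hconjD]
    simp only [hD, Nat.sub_zero, add_zero]
  -- step 1
  have step1 : ∑ m ∈ range (N + H), W m = ((H : ℂ) + 1) * S := vdc_step1 N H u
  -- step 2: expansion of the correlation sum
  have step2 : ∑ m ∈ range (N + H), W m * (starRingEnd ℂ) (W m)
      = (H + 1) • D 0 + ∑ d ∈ Icc 1 H, (H + 1 - d) • (D d + (starRingEnd ℂ) (D d)) := by
    have e1 : ∑ m ∈ range (N + H), W m * (starRingEnd ℂ) (W m)
        = ∑ p ∈ range (H + 1) ×ˢ range (H + 1),
            ∑ m ∈ range (N + H), vdcA N u p.1 m * (starRingEnd ℂ) (vdcA N u p.2 m) := by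
      rw [Finset.sum_product' (s := range (H + 1)) (t := range (H + 1))
        (f := fun h h' => ∑ m ∈ range (N + H), vdcA N u h m * (starRingEnd ℂ) (vdcA N u h' m))]
      simp only [hW, map_sum, Finset.sum_mul_sum]
      rw [Finset.sum_comm]
      exact Finset.sum_congr rfl fun h _ => Finset.sum_comm
    rw [e1, ← Finset.sum_filter_add_sum_filter_not (range (H + 1) ×ˢ range (H + 1))
      (fun p => p.2 ≤ p.1)]
    have e2 : ∑ p ∈ (range (H + 1) ×ˢ range (H + 1)).filter (fun p => p.2 ≤ p.1),
          ∑ m ∈ range (N + H), vdcA N u p.1 m * (starRingEnd ℂ) (vdcA N u p.2 m)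
        = ∑ p ∈ (range (H + 1) ×ˢ range (H + 1)).filter (fun p => p.2 ≤ p.1),
            D (p.1 - p.2) := by
      refine Finset.sum_congr rfl fun p hp => ?_
      simp only [mem_filter, mem_product, mem_range] at hp
      exact vdcT N H u (by omega) hp.2
    have e3 : ∑ p ∈ (range (H + 1) ×ˢ range (H + 1)).filter (fun p => ¬ p.2 ≤ p.1),
          ∑ m ∈ range (N + H), vdcA N u p.1 m * (starRingEnd ℂ) (vdcA N u p.2 m)
        = ∑ p ∈ (range (H + 1) ×ˢ range (H + 1)).filter (fun p => ¬ p.2 ≤ p.1),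
            (starRingEnd ℂ) (D (p.2 - p.1)) := by
      refine Finset.sum_congr rfl fun p hp => ?_
      simp only [mem_filter, mem_product, mem_range] at hp
      have sym : ∑ m ∈ range (N + H), vdcA N u p.1 m * (starRingEnd ℂ) (vdcA N u p.2 m)
          = (starRingEnd ℂ)
              (∑ m ∈ range (N + H), vdcA N u p.2 m * (starRingEnd ℂ) (vdcA N u p.1 m)) := by
        rw [map_sum]
        refine Finset.sum_congr rfl fun m _ => ?_
        rw [map_mul, Complex.conj_conj, mul_comm]
      rw [sym, vdcT N H u (by omega) (by omega)]
    rw [e2, e3, vdcCount_le H D, vdcCount_gt H (fun d => (starRingEnd ℂ) (D d))]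
    rw [vdc_peel H (fun d => (H + 1 - d) • D d),
      vdc_peel H (fun d => (H + 1 - d) • (starRingEnd ℂ) (D d)), hD0]
    simp only [Nat.sub_zero, smul_add, Finset.sum_add_distrib]
    abel
  -- real parts
  have reLHS : (∑ m ∈ range (N + H), W m * (starRingEnd ℂ) (W m)).re
      = ∑ m ∈ range (N + H), ‖W m‖ ^ 2 := by
    rw [Complex.re_sum]
    refine Finset.sum_congr rfl fun m _ => ?_
    rw [Complex.mul_conj, Complex.ofReal_re, Complex.sq_norm]
  have reRHS : ((H + 1) • D 0 + ∑ d ∈ Icc 1 H, (H + 1 - d) • (D d + (starRingEnd ℂ) (D d))).re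
      = ((H : ℝ) + 1) * A + 2 * B := by
    rw [Complex.add_re]
    congr 1
    · have hD0re : (D 0).re = A := by
        simp only [hD, Nat.sub_zero, add_zero, hA, Complex.re_sum]
        refine Finset.sum_congr rfl fun n _ => ?_
        rw [Complex.mul_conj, Complex.ofReal_re, Complex.sq_norm]
      rw [nsmul_eq_mul]
      simp only [Complex.mul_re, Complex.natCast_re, Complex.natCast_im, zero_mul, sub_zero]
      rw [hD0re]
      push_cast
      ring
    · rw [Complex.re_sum, hB, Finset.mul_sum]
      refine Finset.sum_congr rfl fun d hd => ?_
      rw [mem_Icc] at hd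
      have hcre : (∑ n ∈ Finset.range (N - d), u (n + d) * (starRingEnd ℂ) (u n)).re
          = (D d).re := by
        rw [← hconjD, Complex.conj_re]
      rw [nsmul_eq_mul]
      simp only [Complex.mul_re, Complex.natCast_re, Complex.natCast_im, zero_mul, sub_zero,
        Complex.add_re, Complex.conj_re]
      rw [hcre] at *
      rw [Nat.cast_sub (by omega : d ≤ H + 1)]
      push_cast
      ring
  have main_re : ∑ m ∈ range (N + H), ‖W m‖ ^ 2 = ((H : ℝ) + 1) * A + 2 * B := by
    have := congrArg Complex.re step2
    rw [reLHS, reRHS] at this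
    exact this
  -- Cauchy–Schwarz
  have key : (((H : ℝ) + 1) * ‖S‖) ^ 2
      ≤ ((N : ℝ) + H) * (((H : ℝ) + 1) * A + 2 * B) := by
    have h1 : ‖∑ m ∈ range (N + H), W m‖ = ((H : ℝ) + 1) * ‖S‖ := by
      rw [step1, norm_mul]
      have h2 : ((H : ℂ) + 1) = ((H + 1 : ℕ) : ℂ) := by push_cast; ring
      rw [h2, Complex.norm_natCast]
      push_cast
      ring
    calc (((H : ℝ) + 1) * ‖S‖) ^ 2
        = ‖∑ m ∈ range (N + H), W m‖ ^ 2 := by rw [h1]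
      _ ≤ (∑ m ∈ range (N + H), ‖W m‖) ^ 2 := by
          refine pow_le_pow_left₀ (by positivity) ?_ 2
          exact norm_sum_le _ _
      _ ≤ ((N : ℝ) + H) * ∑ m ∈ range (N + H), ‖W m‖ ^ 2 := by
          have := sq_sum_le_card_mul_sum_sq
            (s := range (N + H)) (f := fun m => ‖W m‖)
          rw [card_range] at this
          push_cast at this ⊢
          exact this
      _ = ((N : ℝ) + H) * (((H : ℝ) + 1) * A + 2 * B) := by rw [main_re]
  -- final assembly
  have hNne : (N : ℝ) ≠ 0 := by positivity
  have hHne : ((H : ℝ) + 1) ≠ 0 := by positivity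
  calc ‖(1 / (N : ℂ)) * S‖ ^ 2
      = ((((H : ℝ) + 1) * ‖S‖) ^ 2) / ((N : ℝ) ^ 2 * ((H : ℝ) + 1) ^ 2) := by
        rw [norm_mul, norm_div, norm_one, Complex.norm_natCast]
        field_simp
    _ ≤ (((N : ℝ) + H) * (((H : ℝ) + 1) * A + 2 * B)) / ((N : ℝ) ^ 2 * ((H : ℝ) + 1) ^ 2) := by
        have hpos : (0 : ℝ) < (N : ℝ) ^ 2 * ((H : ℝ) + 1) ^ 2 := by positivity
        exact (div_le_div_iff_of_pos_right hpos).mpr key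
    _ = (((N : ℝ) + H) / ((N : ℝ) ^ 2 * ((H : ℝ) + 1))) * A
        + 2 * (((N : ℝ) + H) / ((N : ℝ) ^ 2 * ((H : ℝ) + 1) ^ 2)) * B := by
        field_simp
end

section
/- (Bessel/Parseval estimate for weighted correlations) Let N be a positive integer, and let a₁, …, a_N and b₁, …, b_{2N} be complex numbers. Then ∑_{m=1}^{N} |(1/N) ∑_{n=1}^{N} a_n b_{n+m}|² ≤ ∫_0^1 |(1/N) ∑_{n=1}^{N} a_n e^{−2πint}|² · |∑_{p=1}^{2N} b_p e^{2πipt}|² dt. -/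
open Finset intervalIntegral Complex

noncomputable def ee (k : ℤ) (t : ℝ) : ℂ := Complex.exp (2 * Real.pi * Complex.I * k * t)

lemma ee_cont (k : ℤ) : Continuous (ee k) := by unfold ee; fun_prop

lemma ee_integral (k : ℤ) : (∫ t in (0:ℝ)..1, ee k t) = if k = 0 then 1 else 0 := by
  unfold ee
  rcases eq_or_ne k 0 with rfl | hk
  · simp
  · have hc : (2 * (Real.pi:ℂ) * Complex.I * k) ≠ 0 := by
      simp [Real.pi_ne_zero, Complex.I_ne_zero, hk, Complex.ofReal_ne_zero]
    rw [if_neg hk]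
    have h := integral_exp_mul_complex (a:=(0:ℝ)) (b:=1) hc
    simp only [Complex.ofReal_one, Complex.ofReal_zero, mul_one, mul_zero, Complex.exp_zero] at h
    rw [h]
    have : Complex.exp (2 * (Real.pi:ℂ) * Complex.I * k) = 1 := by
      rw [show (2 * (Real.pi:ℂ) * Complex.I * k) = k * (2 * Real.pi * Complex.I) by ring]
      exact Complex.exp_int_mul_two_pi_mul_I k
    rw [this]; simp
lemma ee_conj (k : ℤ) (t : ℝ) : (starRingEnd ℂ) (ee k t) = ee (-k) t := by
  unfold ee
  rw [← Complex.exp_conj]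
  congr 1
  simp only [map_mul, Complex.conj_I, Complex.conj_ofReal, map_ofNat, map_intCast]
  push_cast; ring
lemma ee_mul (k l : ℤ) (t : ℝ) : ee k t * ee l t = ee (k + l) t := by
  unfold ee
  rw [← Complex.exp_add]
  congr 1; push_cast; ring

set_option maxHeartbeats 1000000 in
lemma parseval (s : Finset ℤ) (c : ℤ → ℂ) :
    (∫ t in (0:ℝ)..1, ‖∑ k ∈ s, c k * ee k t‖ ^ 2)
      = ∑ k ∈ s, ‖c k‖ ^ 2 := by
  have h1 : ∀ t : ℝ, (‖∑ k ∈ s, c k * ee k t‖ ^ 2 : ℝ)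
      = (∑ k ∈ s, ∑ l ∈ s, c k * (starRingEnd ℂ) (c l) * ee (k - l) t).re := by
    intro t
    have : (∑ k ∈ s, ∑ l ∈ s, c k * (starRingEnd ℂ) (c l) * ee (k - l) t)
        = (∑ k ∈ s, c k * ee k t) * (starRingEnd ℂ) (∑ l ∈ s, c l * ee l t) := by
      rw [map_sum, Finset.sum_mul_sum]
      refine Finset.sum_congr rfl fun k _ => Finset.sum_congr rfl fun l _ => ?_
      rw [map_mul, ee_conj, mul_mul_mul_comm, ee_mul, sub_eq_add_neg]
    rw [this, Complex.mul_conj, Complex.sq_norm, Complex.ofReal_re]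
  have hint : ∀ k l : ℤ, IntervalIntegrable
      (fun t => c k * (starRingEnd ℂ) (c l) * ee (k - l) t) MeasureTheory.volume 0 1 :=
    fun k l => (Continuous.intervalIntegrable (continuous_const.mul (ee_cont _)) 0 1)
  have hintrow : ∀ k : ℤ, IntervalIntegrable
      (fun t => ∑ l ∈ s, c k * (starRingEnd ℂ) (c l) * ee (k - l) t) MeasureTheory.volume 0 1 := by
    intro k
    have h2 := IntervalIntegrable.sum (f := fun l t => c k * (starRingEnd ℂ) (c l) * ee (k - l) t)
      (μ := MeasureTheory.volume) (a := 0) (b := 1) s (fun l _ => hint k l)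
    have heq : (∑ l ∈ s, fun t : ℝ => c k * (starRingEnd ℂ) (c l) * ee (k - l) t)
        = fun t : ℝ => ∑ l ∈ s, c k * (starRingEnd ℂ) (c l) * ee (k - l) t := by
      funext t; simp
    rwa [heq] at h2
  have hint2 : IntervalIntegrable
      (fun t => ∑ k ∈ s, ∑ l ∈ s, c k * (starRingEnd ℂ) (c l) * ee (k - l) t)
      MeasureTheory.volume 0 1 := by
    have h := IntervalIntegrable.sum
      (f := fun k t => ∑ l ∈ s, c k * (starRingEnd ℂ) (c l) * ee (k - l) t)
      (μ := MeasureTheory.volume) (a := 0) (b := 1) s (fun k _ => hintrow k)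
    have heq : (∑ k ∈ s, fun t : ℝ => ∑ l ∈ s, c k * (starRingEnd ℂ) (c l) * ee (k - l) t)
        = fun t : ℝ => ∑ k ∈ s, ∑ l ∈ s, c k * (starRingEnd ℂ) (c l) * ee (k - l) t := by
      funext t; simp
    rwa [heq] at h
  calc (∫ t in (0:ℝ)..1, ‖∑ k ∈ s, c k * ee k t‖ ^ 2)
      = ∫ t in (0:ℝ)..1, (∑ k ∈ s, ∑ l ∈ s, c k * (starRingEnd ℂ) (c l) * ee (k - l) t).re := by
        simp_rw [h1]
    _ = (∫ t in (0:ℝ)..1, ∑ k ∈ s, ∑ l ∈ s, c k * (starRingEnd ℂ) (c l) * ee (k - l) t).re :=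
        (Complex.reCLM.intervalIntegral_comp_comm hint2)
    _ = (∑ k ∈ s, ∑ l ∈ s, c k * (starRingEnd ℂ) (c l) * (∫ t in (0:ℝ)..1, ee (k - l) t)).re := by
        rw [intervalIntegral.integral_finset_sum
          (f := fun k t => ∑ l ∈ s, c k * (starRingEnd ℂ) (c l) * ee (k - l) t)
          (fun k _ => hintrow k)]
        congr 1
        refine Finset.sum_congr rfl fun k _ => ?_
        rw [intervalIntegral.integral_finset_sum
          (f := fun l t => c k * (starRingEnd ℂ) (c l) * ee (k - l) t) (fun l _ => hint k l)]
        exact Finset.sum_congr rfl fun l _ => intervalIntegral.integral_const_mul _ _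
    _ = ∑ k ∈ s, ‖c k‖ ^ 2 := by
        simp_rw [ee_integral, sub_eq_zero]
        rw [Complex.re_sum]
        refine Finset.sum_congr rfl fun k hk => ?_
        rw [Finset.sum_eq_single k]
        · simp [Complex.mul_conj, Complex.sq_norm]
        · intro l _ hl; simp [Ne.symm hl]
        · intro h; exact absurd hk h

set_option linter.unreachableTactic false
set_option linter.unnecessarySeqFocus false
set_option linter.unusedTactic false

/-- Bessel/Parseval estimate for weighted correlations:
`∑_{m=1}^{N} |(1/N) ∑_{n=1}^{N} a_n b_{n+m}|²
  ≤ ∫₀¹ |(1/N) ∑_{n=1}^{N} a_n e^{−2πint}|² |∑_{p=1}^{2N} b_p e^{2πipt}|² dt`. -/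
theorem bessel_parseval_weighted_correlations (N : ℕ) (hN : 0 < N)
    (a b : ℕ → ℂ) :
    ∑ m ∈ Finset.Icc 1 N,
        ‖(1 / (N : ℂ)) * ∑ n ∈ Finset.Icc 1 N, a n * b (n + m)‖ ^ 2
      ≤ ∫ t in (0 : ℝ)..1,
          ‖(1 / (N : ℂ)) * ∑ n ∈ Finset.Icc 1 N,
              a n * Complex.exp (-(2 * Real.pi * Complex.I * n * t))‖ ^ 2 *
          ‖∑ p ∈ Finset.Icc 1 (2 * N),
              b p * Complex.exp (2 * Real.pi * Complex.I * p * t)‖ ^ 2 := by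
  set S : Finset (ℕ × ℕ) := Finset.Icc 1 N ×ˢ Finset.Icc 1 (2 * N) with hS
  set key : ℕ × ℕ → ℤ := fun q => (q.2 : ℤ) - (q.1 : ℤ) with hkey
  set c : ℤ → ℂ := fun k => ∑ q ∈ S.filter (fun q => key q = k),
    (1 / (N : ℂ)) * (a q.1 * b q.2) with hc
  set K : Finset ℤ := S.image key with hK
  -- Step A: pointwise product identity
  have stepA : ∀ t : ℝ,
      ((1 / (N : ℂ)) * ∑ n ∈ Finset.Icc 1 N,
          a n * Complex.exp (-(2 * Real.pi * Complex.I * n * t))) *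
        (∑ p ∈ Finset.Icc 1 (2 * N), b p * Complex.exp (2 * Real.pi * Complex.I * p * t))
      = ∑ k ∈ K, c k * ee k t := by
    intro t
    have expand : ((1 / (N : ℂ)) * ∑ n ∈ Finset.Icc 1 N,
          a n * Complex.exp (-(2 * Real.pi * Complex.I * n * t))) *
        (∑ p ∈ Finset.Icc 1 (2 * N), b p * Complex.exp (2 * Real.pi * Complex.I * p * t))
        = ∑ q ∈ S, ((1 / (N : ℂ)) * (a q.1 * b q.2)) * ee (key q) t := by
      have hF : (1 / (N : ℂ)) * ∑ n ∈ Finset.Icc 1 N,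
          a n * Complex.exp (-(2 * Real.pi * Complex.I * n * t))
          = ∑ n ∈ Finset.Icc 1 N,
            (1 / (N : ℂ)) * (a n * Complex.exp (-(2 * Real.pi * Complex.I * n * t))) :=
        Finset.mul_sum _ _ _
      rw [hF, Finset.sum_mul_sum, hS, Finset.sum_product]
      refine Finset.sum_congr rfl fun n _ => Finset.sum_congr rfl fun p _ => ?_
      have h1 : Complex.exp (-(2 * Real.pi * Complex.I * n * t)) = ee (-(n : ℤ)) t := by
        unfold ee; congr 1 <;> push_cast <;> ring
      have h2 : Complex.exp (2 * Real.pi * Complex.I * p * t) = ee ((p : ℤ)) t := by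
        unfold ee; congr 1 <;> push_cast <;> ring
      rw [h1, h2]
      have h3 : ee (-(n:ℤ)) t * ee (p:ℤ) t = ee ((p:ℤ) - (n:ℤ)) t := by
        rw [ee_mul]; congr 1; ring
      simp only [hkey]
      rw [← h3]; ring
    rw [expand]
    rw [← Finset.sum_fiberwise_of_maps_to (g := key) (t := K)
      (fun q hq => Finset.mem_image_of_mem key hq)
      (fun q => ((1 / (N : ℂ)) * (a q.1 * b q.2)) * ee (key q) t)]
    refine Finset.sum_congr rfl fun k hk => ?_
    rw [hc, Finset.sum_mul]
    refine Finset.sum_congr rfl fun q hq => ?_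
    rw [Finset.mem_filter] at hq
    rw [hq.2]
  -- Step B/C : the RHS equals ∑_{k ∈ K} |c k|²
  have stepC : (∫ t in (0 : ℝ)..1,
          ‖(1 / (N : ℂ)) * ∑ n ∈ Finset.Icc 1 N,
              a n * Complex.exp (-(2 * Real.pi * Complex.I * n * t))‖ ^ 2 *
          ‖∑ p ∈ Finset.Icc 1 (2 * N),
              b p * Complex.exp (2 * Real.pi * Complex.I * p * t)‖ ^ 2)
      = ∑ k ∈ K, ‖c k‖ ^ 2 := by
    rw [← parseval K c]
    congr 1
    funext t
    rw [← mul_pow, ← norm_mul, stepA t]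
  rw [stepC]
  -- Step D: identify the coefficients for m ∈ [1, N]
  have stepD : ∀ m ∈ Finset.Icc 1 N,
      (1 / (N : ℂ)) * ∑ n ∈ Finset.Icc 1 N, a n * b (n + m) = c ((m : ℕ) : ℤ) := by
    intro m hm
    rw [Finset.mem_Icc] at hm
    rw [Finset.mul_sum, hc]
    refine Finset.sum_nbij' (i := fun n => (n, n + m)) (j := fun q => q.1) ?_ ?_ ?_ ?_ ?_
    · intro n hn
      rw [Finset.mem_Icc] at hn
      simp only [Finset.mem_filter, hS, Finset.mem_product, Finset.mem_Icc, hkey]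
      refine ⟨⟨⟨hn.1, hn.2⟩, by omega, by omega⟩, by push_cast; ring⟩
    · intro q hq
      rw [Finset.mem_filter, hS, Finset.mem_product, Finset.mem_Icc] at hq
      rw [Finset.mem_Icc]
      exact hq.1.1
    · intro n hn; rfl
    · intro q hq
      rw [Finset.mem_filter] at hq
      have : (q.2 : ℤ) = q.1 + m := by simp [hkey] at hq; omega
      have h2 : q.2 = q.1 + m := by exact_mod_cast this
      exact Prod.ext rfl h2.symm
    · intro n hn; rfl
  calc ∑ m ∈ Finset.Icc 1 N,
        ‖(1 / (N : ℂ)) * ∑ n ∈ Finset.Icc 1 N, a n * b (n + m)‖ ^ 2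
      = ∑ m ∈ Finset.Icc 1 N, ‖c ((m : ℕ) : ℤ)‖ ^ 2 :=
        Finset.sum_congr rfl fun m hm => by rw [stepD m hm]
    _ = ∑ k ∈ (Finset.Icc 1 N).image (fun m : ℕ => (m : ℤ)), ‖c k‖ ^ 2 := by
        rw [Finset.sum_image (fun x _ y _ h => by exact_mod_cast h)]
    _ ≤ ∑ k ∈ K, ‖c k‖ ^ 2 := by
        apply Finset.sum_le_sum_of_subset_of_nonneg
        · intro k hk
          rw [Finset.mem_image] at hk
          obtain ⟨m, hm, rfl⟩ := hk
          rw [Finset.mem_Icc] at hm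
          rw [hK, Finset.mem_image]
          refine ⟨(1, 1 + m), ?_, ?_⟩
          · rw [hS, Finset.mem_product, Finset.mem_Icc, Finset.mem_Icc]
            exact ⟨⟨le_refl 1, hN⟩, ⟨by omega, by omega⟩⟩
          · simp only [hkey]; push_cast; ring
        · intro k _ _; positivity
end
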